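/- If G is a loopless graph with carving-width at most w, then the tree-cut torso-width of G is at most 3w/2. -/

import Mathlib

/-- A finite multigraph (loops and parallel edges allowed): each edge in `E`
has an unordered pair of endpoints in `V`. -/
structure Multigraph (V E : Type) where
  ends : E → Sym2 V

namespace Multigraph

variable {V E : Type}

/-- The edge `e` has an end in the vertex set `A`. -/
def incident (G : Multigraph V E) (A : Set V) (e : E) : Prop :=
  ∃ x ∈ G.ends e, x ∈ A

/-- The edge `e` has one end in `A` and one end in `B`. -/
def crosses (G : Multigraph V E) (A B : Set V) (e : E) : Prop :=
  G.incident A e ∧ G.incident B e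

/-- The order of the edge-cut `[A,B]`: the number of edges with one end in `A`
and one end in `B`. -/
noncomputable def cutOrder (G : Multigraph V E) (A B : Set V) : ℕ :=
  {e | G.crosses A B e}.ncard

/-- `[A,B]` is an edge-cut of `G`: an ordered pair of disjoint vertex sets
covering all vertices. -/
def IsCut (G : Multigraph V E) (A B : Set V) : Prop :=
  Disjoint A B ∧ A ∪ B = Set.univ

end Multigraph

/-- A tree-cut decomposition of `G`: a (finite) tree `T` together with pairwise
disjoint bags partitioning `V(G)`. -/
structure TreeCutDecomp {V E : Type} (G : Multigraph V E) (T : Type) where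
  tree : SimpleGraph T
  isTree : tree.IsTree
  finite : Finite T
  bag : T → Set V
  disjoint_bags : ∀ s t : T, s ≠ t → Disjoint (bag s) (bag t)
  cover : ∀ v : V, ∃ t : T, v ∈ bag t

namespace TreeCutDecomp

variable {V E T : Type} {G : Multigraph V E}

/-- The set of nodes of the component of `T - t₁t₂` containing `t₁`. -/
def side (D : TreeCutDecomp G T) (t₁ t₂ : T) : Set T :=
  {s | Relation.ReflTransGen
    (fun x y => D.tree.Adj x y ∧ ¬(x = t₁ ∧ y = t₂) ∧ ¬(x = t₂ ∧ y = t₁)) t₁ s}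

/-- The union of the bags over the component of `T - t₁t₂` containing `t₁`. -/
def sideBags (D : TreeCutDecomp G T) (t₁ t₂ : T) : Set V :=
  ⋃ s ∈ D.side t₁ t₂, D.bag s

/-- The adhesion set of the tree edge `t₁t₂`: the edges of `G` with one end in
the bags on the `t₁` side and one end in the bags on the `t₂` side. -/
def adhEdges (D : TreeCutDecomp G T) (t₁ t₂ : T) : Set E :=
  {e | G.crosses (D.sideBags t₁ t₂) (D.sideBags t₂ t₁) e}

/-- `x` and `y` are joined by a path of `T` avoiding the node set `C`. -/
def compRel (D : TreeCutDecomp G T) (C : Set T) (x y : T) : Prop :=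
  Relation.ReflTransGen (fun a b => D.tree.Adj a b ∧ a ∉ C ∧ b ∉ C) x y

/-- The union of the bags over the component of `T - C` containing `s`. -/
def compBags (D : TreeCutDecomp G T) (C : Set T) (s : T) : Set V :=
  ⋃ s' ∈ {s' | D.compRel C s s'}, D.bag s'

/-- The edges of the torso at `C`, viewed as edges of `G`: those edges having
no component of `T - C` whose bags contain all their ends. -/
def torsoEdges (D : TreeCutDecomp G T) (C : Set T) : Set E :=
  {e | ¬ ∃ s : T, s ∉ C ∧ ∀ x ∈ G.ends e, x ∈ D.compBags C s}

/-- `x` and `y` are joined in the forest obtained from `T` by deleting all edges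
whose adhesion set has fewer than `θ` elements. -/
def cellRel (D : TreeCutDecomp G T) (θ : ℕ) (x y : T) : Prop :=
  Relation.ReflTransGen (fun a b => D.tree.Adj a b ∧ θ ≤ (D.adhEdges a b).ncard) x y

/-- A pseudo-`θ`-cell: a component of the forest obtained from `T` by deleting
all edges whose adhesion set has size less than `θ`. -/
def IsPseudoCell (D : TreeCutDecomp G T) (θ : ℕ) (C : Set T) : Prop :=
  ∃ t : T, C = {s | D.cellRel θ t s}

/-- A `θ`-cell: a pseudo-`θ`-cell whose torso has at least `θ` edges. -/
def IsCell (D : TreeCutDecomp G T) (θ : ℕ) (C : Set T) : Prop :=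
  D.IsPseudoCell θ C ∧ θ ≤ (D.torsoEdges C).ncard

/-- `(T,𝒳)` is `θ`-smooth. -/
def Smooth (D : TreeCutDecomp G T) (θ : ℕ) : Prop :=
  ∀ C : Set T, (D.IsCell θ C ∨ ∃ t : T, C = {t}) →
    ∀ Y Z : Set E, Y ⊆ D.torsoEdges C → Z ⊆ D.torsoEdges C →
      Y.ncard = Z.ncard → Y.ncard ≤ θ →
      ¬ ∃ A B : Set V, G.IsCut A B ∧ G.cutOrder A B < Y.ncard ∧
        (∀ e ∈ Y, G.incident A e) ∧ (∀ e ∈ Z, G.incident B e)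

end TreeCutDecomp

/-- A carving: a tree-cut decomposition in which every leaf bag is a singleton,
every non-leaf bag is empty, and every node of the tree has degree 1 or 3. -/
def TreeCutDecomp.IsCarving {V E T : Type} {G : Multigraph V E}
    (D : TreeCutDecomp G T) : Prop :=
  ∀ t : T,
    ((D.tree.neighborSet t).ncard = 1 → ∃ v : V, D.bag t = {v}) ∧
    ((D.tree.neighborSet t).ncard ≠ 1 → D.bag t = ∅) ∧
    ((D.tree.neighborSet t).ncard = 1 ∨ (D.tree.neighborSet t).ncard = 3)


/-- Helper: a walk avoiding `t` yields a refl-trans chain of adjacencies avoiding `t`. -/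
lemma walk_rtg_aux {T : Type} {g : SimpleGraph T} {t : T} :
    ∀ {s u : T} (q : g.Walk s u), t ∉ q.support →
    Relation.ReflTransGen (fun a b => g.Adj a b ∧ a ≠ t ∧ b ≠ t) s u := by
  intro s u q
  induction q with
  | nil => intro _; exact Relation.ReflTransGen.refl
  | cons h q ih =>
    intro hns
    rw [SimpleGraph.Walk.support_cons, List.mem_cons] at hns
    push_neg at hns
    refine Relation.ReflTransGen.head ⟨h, fun hh => hns.1 hh.symm, ?_⟩ (ih hns.2)
    intro hh
    exact hns.2 (hh ▸ q.start_mem_support)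

/-- Helper: in a connected graph, every `u ≠ t` can be reached from a neighbor of `t`
avoiding `t`. -/
lemma exists_nbr_rtg_aux {T : Type} {g : SimpleGraph T} (hg : g.Connected) {t u : T}
    (hu : u ≠ t) :
    ∃ s, g.Adj t s ∧ Relation.ReflTransGen (fun a b => g.Adj a b ∧ a ≠ t ∧ b ≠ t) s u := by
  classical
  obtain ⟨w⟩ := hg.preconnected t u
  obtain ⟨pw, hp⟩ := w.toPath
  cases pw with
  | nil => exact absurd rfl hu
  | @cons _ s _ hadj q =>
    have hnodup := hp.support_nodup
    rw [SimpleGraph.Walk.support_cons, List.nodup_cons] at hnodup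
    exact ⟨s, hadj, walk_rtg_aux q hnodup.1⟩

/-- Helper counting lemma: if every element of `X` lies in at least two of `A,B,C`,
then `2|X| ≤ |A| + |B| + |C|`. -/
lemma two_of_three_count_aux {α : Type} [Fintype α] (X A B C : Set α)
    (h : ∀ x ∈ X, (x ∈ A ∧ x ∈ B) ∨ (x ∈ A ∧ x ∈ C) ∨ (x ∈ B ∧ x ∈ C)) :
    2 * X.ncard ≤ A.ncard + B.ncard + C.ncard := by
  classical
  rw [Set.ncard_eq_toFinset_card', Set.ncard_eq_toFinset_card',
    Set.ncard_eq_toFinset_card', Set.ncard_eq_toFinset_card']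
  have key : 2 * X.toFinset.card ≤
      ∑ x ∈ X.toFinset, ((if x ∈ A.toFinset then 1 else 0) +
        ((if x ∈ B.toFinset then 1 else 0) + (if x ∈ C.toFinset then 1 else 0))) := by
    rw [two_mul]
    calc X.toFinset.card + X.toFinset.card
        = ∑ x ∈ X.toFinset, 2 := by rw [Finset.sum_const, smul_eq_mul]; ring
      _ ≤ _ := by
          refine Finset.sum_le_sum fun x hx => ?_
          rw [Set.mem_toFinset] at hx
          rcases h x hx with ⟨h1, h2⟩ | ⟨h1, h2⟩ | ⟨h1, h2⟩ <;>
            simp only [Set.mem_toFinset, h1, h2, if_true] <;> split_ifs <;> omega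
  rw [Finset.sum_add_distrib, Finset.sum_add_distrib] at key
  have hA : ∑ x ∈ X.toFinset, (if x ∈ A.toFinset then 1 else 0) ≤ A.toFinset.card := by
    rw [← Finset.card_filter]
    exact Finset.card_le_card fun x hx => (Finset.mem_filter.mp hx).2
  have hB : ∑ x ∈ X.toFinset, (if x ∈ B.toFinset then 1 else 0) ≤ B.toFinset.card := by
    rw [← Finset.card_filter]
    exact Finset.card_le_card fun x hx => (Finset.mem_filter.mp hx).2
  have hC : ∑ x ∈ X.toFinset, (if x ∈ C.toFinset then 1 else 0) ≤ C.toFinset.card := by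
    rw [← Finset.card_filter]
    exact Finset.card_le_card fun x hx => (Finset.mem_filter.mp hx).2
  omega

/-- If `G` is a loopless graph with carving-width at most `w`,
then the tree-cut torso-width of `G` is at most `3w/2` (i.e. twice the
torso-width of some tree-cut decomposition is at most `3w`). -/
theorem carvingWidth_le_imp_torsoWidth_le {V E : Type} [Fintype V] [Fintype E]
    (G : Multigraph V E) (hloopless : ∀ e : E, ¬ (G.ends e).IsDiag) (w : ℕ)
    (h : ∃ (T : Type) (D : TreeCutDecomp G T), D.IsCarving ∧
      ∀ a b : T, D.tree.Adj a b → (D.adhEdges a b).ncard ≤ w) :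
    ∃ (T : Type) (D : TreeCutDecomp G T),
      ∀ t : T, 2 * (D.torsoEdges {t}).ncard ≤ 3 * w := by
  classical
  obtain ⟨T, D, hcarv, hadh⟩ := h
  refine ⟨T, D, fun t => ?_⟩
  have hconn : D.tree.Connected := D.isTree.isConnected
  -- every node ≠ t sits in the component of some neighbor of t
  have hcomp : ∀ u : T, u ≠ t → ∃ s, D.tree.Adj t s ∧ D.compRel {t} s u := by
    intro u hu
    obtain ⟨s, hadj, hr⟩ := exists_nbr_rtg_aux hconn hu
    refine ⟨s, hadj, Relation.ReflTransGen.mono (fun a b hab => ⟨hab.1, ?_, ?_⟩) _ _ hr⟩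
    · simpa using hab.2.1
    · simpa using hab.2.2
  -- membership in adhesion sets from component information
  have hadhmem : ∀ (a b : T), D.tree.Adj t a → D.tree.Adj t b → b ≠ a →
      ∀ e, ∀ x ∈ G.ends e, ∀ y ∈ G.ends e,
        x ∈ D.compBags {t} a → y ∈ D.compBags {t} b → e ∈ D.adhEdges a t := by
    intro a b hta htb hba e x hxe y hye hxa hyb
    obtain ⟨u, hu, hxu⟩ := Set.mem_iUnion₂.mp hxa
    obtain ⟨u', hu', hyu'⟩ := Set.mem_iUnion₂.mp hyb
    constructor
    · -- x is on the a-side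
      refine ⟨x, hxe, Set.mem_biUnion ?_ hxu⟩
      refine Relation.ReflTransGen.mono (fun p q hpq => ⟨hpq.1, ?_, ?_⟩) _ _ hu
      · rintro ⟨hp, hq⟩; exact hpq.2.2 (by simp [hq])
      · rintro ⟨hp, hq⟩; exact hpq.2.1 (by simp [hp])
    · -- y is on the t-side
      refine ⟨y, hye, Set.mem_biUnion ?_ hyu'⟩
      have step1 : Relation.ReflTransGen
          (fun p q => D.tree.Adj p q ∧ ¬(p = t ∧ q = a) ∧ ¬(p = a ∧ q = t)) t b := by
        refine Relation.ReflTransGen.single ⟨htb, ?_, ?_⟩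
        · rintro ⟨-, hq⟩; exact hba hq
        · rintro ⟨hp, -⟩; exact D.tree.irrefl (hp ▸ hta)
      refine step1.trans (Relation.ReflTransGen.mono (fun p q hpq => ⟨hpq.1, ?_, ?_⟩) _ _ hu')
      · rintro ⟨hp, -⟩; exact hpq.2.1 (by simp [hp])
      · rintro ⟨-, hq⟩; exact hpq.2.2 (by simp [hq])
  rcases (hcarv t).2.2 with hdeg | hdeg
  · -- leaf case
    obtain ⟨v, hv⟩ := (hcarv t).1 hdeg
    obtain ⟨s, hs⟩ := Set.ncard_eq_one.mp hdeg
    have hadjts : D.tree.Adj t s := by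
      have : s ∈ D.tree.neighborSet t := by rw [hs]; exact rfl
      exact this
    have hst : s ≠ t := fun hh => D.tree.irrefl (hh ▸ hadjts)
    -- every vertex other than v is in the component bags of s
    have hall : ∀ x : V, x ≠ v → x ∈ D.compBags {t} s := by
      intro x hxv
      obtain ⟨u, hu⟩ := D.cover x
      have hut : u ≠ t := by
        rintro rfl; rw [hv] at hu; exact hxv hu
      obtain ⟨s', hadj', hr'⟩ := hcomp u hut
      have hss' : s' = s := by
        have : s' ∈ D.tree.neighborSet t := hadj'
        rw [hs] at this; exact this
      exact Set.mem_biUnion (hss' ▸ hr') hu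
    have hsub : D.torsoEdges {t} ⊆ D.adhEdges t s := by
      intro e he
      simp only [TreeCutDecomp.torsoEdges, Set.mem_setOf_eq] at he
      push_neg at he
      obtain ⟨x, hxe, hx⟩ := he s (by simpa using hst)
      have hxv : x = v := by
        by_contra hne
        exact hx (hall x hne)
      obtain ⟨y, hy⟩ := Sym2.mem_iff_exists.mp hxe
      have hyv : y ≠ v := by
        rintro rfl
        exact hloopless e (by rw [hy, ← hxv]; exact Sym2.mk_isDiag_iff.mpr rfl)
      constructor
      · -- v on the t-side
        exact ⟨x, hxe, Set.mem_biUnion (Relation.ReflTransGen.refl) (hxv ▸ hv ▸ rfl)⟩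
      · -- y on the s-side
        refine ⟨y, by rw [hy]; exact Sym2.mem_mk_right x y, ?_⟩
        obtain ⟨u, hu⟩ := D.cover y
        have hut : u ≠ t := by
          rintro rfl; rw [hv] at hu; exact hyv hu
        obtain ⟨s', hadj', hr'⟩ := exists_nbr_rtg_aux hconn hut
        have hss' : s' = s := by
          have : s' ∈ D.tree.neighborSet t := hadj'
          rw [hs] at this; exact this
        subst hss'
        refine Set.mem_biUnion (Relation.ReflTransGen.mono (fun p q hpq => ⟨hpq.1, ?_, ?_⟩) _ _ hr') hu
        · rintro ⟨-, hq⟩; exact hpq.2.2 hq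
        · rintro ⟨hp, -⟩; exact hpq.2.1 hp
    have h1 : (D.torsoEdges {t}).ncard ≤ w :=
      le_trans (Set.ncard_le_ncard hsub (Set.toFinite _)) (hadh t s hadjts)
    omega
  · -- degree-3 case
    obtain ⟨s₁, s₂, s₃, h12, h13, h23, hset⟩ := Set.ncard_eq_three.mp hdeg
    have hbagt : D.bag t = ∅ := (hcarv t).2.1 (by omega)
    have hadj : ∀ s ∈ D.tree.neighborSet t, D.tree.Adj t s := fun s hs => hs
    have hadj1 : D.tree.Adj t s₁ := hadj s₁ (by rw [hset]; simp)
    have hadj2 : D.tree.Adj t s₂ := hadj s₂ (by rw [hset]; simp)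
    have hadj3 : D.tree.Adj t s₃ := hadj s₃ (by rw [hset]; simp)
    have hvert : ∀ z : V, ∃ s, s ∈ D.tree.neighborSet t ∧ z ∈ D.compBags {t} s := by
      intro z
      obtain ⟨u, hu⟩ := D.cover z
      have hut : u ≠ t := by
        rintro rfl; rw [hbagt] at hu; exact hu
      obtain ⟨s, hadj', hr'⟩ := hcomp u hut
      exact ⟨s, hadj', Set.mem_biUnion hr' hu⟩
    have hkey : ∀ e ∈ D.torsoEdges {t},
        (e ∈ D.adhEdges s₁ t ∧ e ∈ D.adhEdges s₂ t) ∨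
        (e ∈ D.adhEdges s₁ t ∧ e ∈ D.adhEdges s₃ t) ∨
        (e ∈ D.adhEdges s₂ t ∧ e ∈ D.adhEdges s₃ t) := by
      intro e he
      simp only [TreeCutDecomp.torsoEdges, Set.mem_setOf_eq] at he
      obtain ⟨x, y, hxy⟩ : ∃ x y, G.ends e = s(x, y) := by
        obtain ⟨⟨x, y⟩, hh⟩ := Quot.exists_rep (G.ends e)
        exact ⟨x, y, hh.symm⟩
      have hxe : x ∈ G.ends e := by rw [hxy]; exact Sym2.mem_mk_left x y
      have hye : y ∈ G.ends e := by rw [hxy]; exact Sym2.mem_mk_right x y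
      obtain ⟨a, haN, hxa⟩ := hvert x
      obtain ⟨b, hbN, hyb⟩ := hvert y
      have hab : a ≠ b := by
        rintro rfl
        refine he ⟨a, ?_, ?_⟩
        · simpa using fun hh => D.tree.irrefl (hh ▸ hadj a haN)
        · intro z hz
          rw [hxy] at hz
          rcases Sym2.mem_iff.mp hz with rfl | rfl
          · exact hxa
          · exact hyb
      have hmab : e ∈ D.adhEdges a t :=
        hadhmem a b (hadj a haN) (hadj b hbN) hab.symm e x hxe y hye hxa hyb
      have hmba : e ∈ D.adhEdges b t :=
        hadhmem b a (hadj b hbN) (hadj a haN) hab e y hye x hxe hyb hxa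
      rw [hset] at haN hbN
      simp only [Set.mem_insert_iff, Set.mem_singleton_iff] at haN hbN
      rcases haN with rfl | rfl | rfl <;> rcases hbN with rfl | rfl | rfl <;>
        first
          | exact absurd rfl hab
          | exact Or.inl ⟨hmab, hmba⟩
          | exact Or.inl ⟨hmba, hmab⟩
          | exact Or.inr (Or.inl ⟨hmab, hmba⟩)
          | exact Or.inr (Or.inl ⟨hmba, hmab⟩)
          | exact Or.inr (Or.inr ⟨hmab, hmba⟩)
          | exact Or.inr (Or.inr ⟨hmba, hmab⟩)
    have hcount := two_of_three_count_aux (D.torsoEdges {t})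
      (D.adhEdges s₁ t) (D.adhEdges s₂ t) (D.adhEdges s₃ t) hkey
    have b1 : (D.adhEdges s₁ t).ncard ≤ w := hadh s₁ t hadj1.symm
    have b2 : (D.adhEdges s₂ t).ncard ≤ w := hadh s₂ t hadj2.symm
    have b3 : (D.adhEdges s₃ t).ncard ≤ w := hadh s₃ t hadj3.symm
    omega
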